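/- Let $u' \le_k w'$ in $S_n$ with $u'$ anti-Grassmannian, let $f' = t_{u'(\{1,\dots,k\})} \circ (u' w'^{-1})$ be the associated bounded affine permutation, and suppose $f'(a) > f'(a+1)$ for some $1 \le a \le n-1$. Then $w'^{-1}(a) < w'^{-1}(a+1)$. -/
import Mathlib


/-- Coxeter length of a permutation of `Fin n`: the number of inversions. -/
def len {n : ℕ} (u : Equiv.Perm (Fin n)) : ℕ :=
  (Finset.univ.filter fun p : Fin n × Fin n => p.1 < p.2 ∧ u p.2 < u p.1).card

/-- `w` covers `u` in the strong Bruhat order: `w = u·t` for a transposition `t`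
and `ℓ(w) = ℓ(u) + 1`. -/
def BruhatCover {n : ℕ} (u w : Equiv.Perm (Fin n)) : Prop :=
  (∃ i j : Fin n, i ≠ j ∧ w = u * Equiv.swap i j) ∧ len w = len u + 1

/-- The strong Bruhat order on `S_n`. -/
def BruhatLE {n : ℕ} (u w : Equiv.Perm (Fin n)) : Prop :=
  Relation.ReflTransGen BruhatCover u w

/-- The image `u({1,…,k})`, zero-indexed as `u({i : i.val < k})`. -/
def kImage {n : ℕ} (k : ℕ) (u : Equiv.Perm (Fin n)) : Finset (Fin n) :=
  (Finset.univ.filter fun i : Fin n => i.val < k).image u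

/-- `w` is a `k`-cover of `u`: a Bruhat cover with `w({1,…,k}) ≠ u({1,…,k})`. -/
def KBruhatCover {n : ℕ} (k : ℕ) (u w : Equiv.Perm (Fin n)) : Prop :=
  BruhatCover u w ∧ kImage k u ≠ kImage k w

/-- The `k`-Bruhat order on `S_n`: transitive closure of `k`-covers. -/
def KBruhatLE {n : ℕ} (k : ℕ) (u w : Equiv.Perm (Fin n)) : Prop :=
  Relation.ReflTransGen (KBruhatCover k) u w

/-- `z` lies in the Young subgroup `S_k × S_{n-k}`, i.e. `z` fixes the sets
`{1,…,k}` and `{k+1,…,n}` setwise. -/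
def IsYoung {n : ℕ} (k : ℕ) (z : Equiv.Perm (Fin n)) : Prop :=
  ∀ i : Fin n, (z i).val < k ↔ i.val < k

/-- `u` is anti-Grassmannian of type `(k,n)`: decreasing on `{1,…,k}` and on
`{k+1,…,n}` (zero-indexed: on `val < k` and on `k ≤ val`). -/
def AntiGrass {n : ℕ} (k : ℕ) (u : Equiv.Perm (Fin n)) : Prop :=
  (∀ a b : Fin n, a < b → b.val < k → u b < u a) ∧
  (∀ a b : Fin n, a < b → k ≤ a.val → u b < u a)

/-- The residue of `i : ℤ` modulo `n`, as an element of `Fin n` (zero-indexed). -/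
def resFin {n : ℕ} [NeZero n] (i : ℤ) : Fin n :=
  ⟨(i % (n : ℤ)).toNat, by
    have hn : 0 < (n : ℤ) := by exact_mod_cast Nat.pos_of_ne_zero (NeZero.ne n)
    have h1 := Int.emod_nonneg i (ne_of_gt hn)
    have h2 := Int.emod_lt_of_pos i hn
    omega⟩

/-- The `n`-periodic extension of a permutation of `Fin n` to a bijection of `ℤ`. -/
def extPerm {n : ℕ} [NeZero n] (u : Equiv.Perm (Fin n)) : ℤ → ℤ :=
  fun i => (n : ℤ) * (i / (n : ℤ)) + ((u (resFin i)).val : ℤ)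

/-- The translation element `t_J : ℤ → ℤ`, sending `i ↦ i + n` when the residue
of `i` lies in `J`, and fixing `i` otherwise. -/
def transJ {n : ℕ} [NeZero n] (J : Finset (Fin n)) : ℤ → ℤ :=
  fun i => if resFin i ∈ J then i + (n : ℤ) else i

/-- The index set `ω_k = {1,…,k}` (zero-indexed: residues `< k`). -/
def omegaSet (n k : ℕ) : Finset (Fin n) :=
  Finset.univ.filter fun i : Fin n => i.val < k

/-- The affine permutation `f_{u,w} = u ∘ t_{ω_k} ∘ w⁻¹`. -/
def fUW {n : ℕ} [NeZero n] (k : ℕ) (u w : Equiv.Perm (Fin n)) : ℤ → ℤ :=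
  extPerm u ∘ transJ (omegaSet n k) ∘ extPerm w⁻¹

lemma resFin_natCast {n : ℕ} [NeZero n] (m : ℕ) (hm : m < n) :
    (resFin (m : ℤ) : Fin n) = ⟨m, hm⟩ := by
  unfold resFin
  ext
  simp only
  have : (m : ℤ) % (n : ℤ) = m := Int.emod_eq_of_lt (by positivity) (by exact_mod_cast hm)
  omega

lemma extPerm_natCast {n : ℕ} [NeZero n] (u : Equiv.Perm (Fin n)) (m : ℕ) (hm : m < n) :
    extPerm u (m : ℤ) = ((u ⟨m, hm⟩).val : ℤ) := by
  unfold extPerm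
  rw [resFin_natCast m hm]
  have : (m : ℤ) / (n : ℤ) = 0 :=
    Int.ediv_eq_zero_of_lt (by positivity) (by exact_mod_cast hm)
  rw [this]; ring

lemma mem_kImage {n k : ℕ} (u : Equiv.Perm (Fin n)) (x : Fin n) :
    u x ∈ kImage k u ↔ x.val < k := by
  unfold kImage
  simp only [Finset.mem_image, Finset.mem_filter, Finset.mem_univ, true_and]
  constructor
  · rintro ⟨y, hy, hxy⟩
    rwa [← u.injective hxy]
  · intro hx; exact ⟨x, hx, rfl⟩

/-- If `u' ≤_k w'` with `u'` anti-Grassmannian and the associated bounded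
affine permutation `f' = t_{u'({1,…,k})} ∘ (u'w'⁻¹)` satisfies
`f'(a) > f'(a+1)`, then `w'⁻¹(a) < w'⁻¹(a+1)`.  (Zero-indexed: `a : Fin n`
with `a.val + 1 < n`.) -/
theorem claim_red {n k : ℕ} [NeZero n] (hk : k ≤ n)
    (u' w' : Equiv.Perm (Fin n)) (a : Fin n) (ha : a.val + 1 < n)
    (hAG : AntiGrass k u') (h : KBruhatLE k u' w')
    (hf : (transJ (kImage k u') ∘ extPerm (u' * w'⁻¹)) (((a.val : ℕ) + 1 : ℕ) : ℤ) <
          (transJ (kImage k u') ∘ extPerm (u' * w'⁻¹)) ((a.val : ℕ) : ℤ)) :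
    w'⁻¹ a < w'⁻¹ ⟨a.val + 1, ha⟩ := by
  set x := w'⁻¹ a with hx
  set y := w'⁻¹ ⟨a.val + 1, ha⟩ with hy
  have han : a.val < n := a.isLt
  have e1 : extPerm (u' * w'⁻¹) ((a.val : ℕ) : ℤ) = ((u' x).val : ℤ) := by
    rw [extPerm_natCast (u' * w'⁻¹) a.val han]
    congr 1
  have e2 : extPerm (u' * w'⁻¹) (((a.val : ℕ) + 1 : ℕ) : ℤ) = ((u' y).val : ℤ) := by
    rw [extPerm_natCast (u' * w'⁻¹) (a.val + 1) ha]
    congr 1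
  have tr : ∀ z : Fin n, transJ (kImage k u') ((u' z).val : ℤ)
      = ((u' z).val : ℤ) + (if z.val < k then (n : ℤ) else 0) := by
    intro z
    unfold transJ
    rw [resFin_natCast (u' z).val (u' z).isLt]
    by_cases hz : z.val < k
    · rw [if_pos (by rwa [Fin.eta, mem_kImage]), if_pos hz]
    · rw [if_neg (by rw [Fin.eta, mem_kImage]; exact hz), if_neg hz]; ring
  simp only [Function.comp_apply, e1, e2, tr] at hf
  have hux : (u' x).val < n := (u' x).isLt
  have huy : (u' y).val < n := (u' y).isLt
  -- case analysis
  by_cases hxk : x.val < k <;> by_cases hyk : y.val < k <;>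
      simp only [if_pos, if_neg, hxk, hyk, if_true, if_false] at hf
  · -- both < k : u' y < u' x, use antiGrass first part
    have huv : u' y < u' x := by
      rw [Fin.lt_def]; omega
    rcases lt_trichotomy x y with h1 | h1 | h1
    · exact h1
    · exact absurd h1 (by intro h2; rw [h2] at huv; exact lt_irrefl _ huv)
    · exact absurd (hAG.1 y x h1 hxk) (not_lt.mpr (le_of_lt huv))
  · -- x < k, y ≥ k : contradiction from hf? No: here hf says u'y < u'x + n always true...
    exact Fin.lt_def.mpr (by omega)
  · -- x ≥ k, y < k : hf gives u'y + n < u'x, impossible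
    exfalso; omega
  · -- both ≥ k
    have huv : u' y < u' x := by
      rw [Fin.lt_def]; omega
    rcases lt_trichotomy x y with h1 | h1 | h1
    · exact h1
    · exact absurd h1 (by intro h2; rw [h2] at huv; exact lt_irrefl _ huv)
    · exact absurd (hAG.2 y x h1 (not_lt.mp hyk)) (not_lt.mpr (le_of_lt huv))
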